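/- (Regime 2 increments.) Suppose ρ = 0 and r_2 < α < r_3, where r_2 = 1 + γ/γ_2 and r_3 = r_2 + γ/γ_3. Let ℓ = (1+γ)/(2+γ) and let f(x) = r_2 + ℓ·(α − x), with f^0(x) = x and f^{j+1} = f ∘ f^j. Then in the limiting dynamical system the hitting times t_j satisfy: t_1 = 2 − α, t_2 − t_1 = γ/γ_2, and for every j ≥ 3, t_j − t_{j−1} = (α − f^{j−3}(r_2)) + (1 − (3 + 3γ + γ²)·(α − f^{j−3}(r_2)))/(2+γ). Moreover, as j → ∞ these increments converge to β_∞ = (α − r*) + (1 − (3 + 3γ + γ²)·(α − r*))/(2+γ), where r* = (r_2 + ℓ·α)/(1 + ℓ). -/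

import Mathlib

namespace SelectiveSweeps

noncomputable section

/-- `γ_j = (1+γ)^j − 1` for `j ∈ ℤ`. -/
def gam (γ : ℝ) (j : ℤ) : ℝ := (1 + γ) ^ j - 1

/-- `λ_j = (1+ρ)(1+γ)^j − 1` for `j ∈ ℤ`. -/
def lam (γ ρ : ℝ) (j : ℤ) : ℝ := (1 + ρ) * (1 + γ) ^ j - 1

/-- A state of the recursion: the time `s_n` together with the values `y_j(s_n)`, `j ∈ ℕ`. -/
structure St where
  s : ℝ
  y : ℕ → ℝ

/-- `α_n = α + ρ s_n / γ`. -/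
def alphaOf (γ ρ α : ℝ) (σ : St) : ℝ := α + ρ * σ.s / γ

/-- `m_n = max {j : y_j(s_n) = α_n}`. -/
def mOf (γ ρ α : ℝ) (σ : St) : ℕ := sSup {j : ℕ | σ.y j = alphaOf γ ρ α σ}

/-- `k_n = max {j : y_j(s_n) > 0}`. -/
def kOf (σ : St) : ℕ := sSup {j : ℕ | 0 < σ.y j}

/-- `k_n^* = k_n` if `y_{k_n}(s_n) < 1`, and `k_n + 1` if `y_{k_n}(s_n) = 1`. -/
def kstarOf (σ : St) : ℕ := if σ.y (kOf σ) < 1 then kOf σ else kOf σ + 1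

/-- `δ_{n,j}`:  `(α_n − y_j(s_n))·γ/(λ_{j−m_n} − ρ)` for `m_n < j < k_n^*` and
`(1 − y_{k_n^*}(s_n))·γ/λ_{k_n^*−m_n}` for `j = k_n^*`. -/
def deltaOf (γ ρ α : ℝ) (σ : St) (j : ℕ) : ℝ :=
  if j = kstarOf σ then
    (1 - σ.y (kstarOf σ)) * γ / lam γ ρ ((kstarOf σ : ℤ) - (mOf γ ρ α σ : ℤ))
  else
    (alphaOf γ ρ α σ - σ.y j) * γ / (lam γ ρ ((j : ℤ) - (mOf γ ρ α σ : ℤ)) - ρ)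

/-- `Δ_n = min {δ_{n,j} : m_n < j ≤ k_n^*}`. -/
def DeltaOf (γ ρ α : ℝ) (σ : St) : ℝ :=
  sInf (deltaOf γ ρ α σ '' Set.Ioc (mOf γ ρ α σ) (kstarOf σ))

/-- One step of the recursion: `s_{n+1} = s_n + Δ_n` and, evaluating
`y_j(s_n + t) = max (y_j(s_n) + t·λ_{j−m_n}/γ) 0` (for `j ≤ k_n^*`; `0` for `j > k_n^*`)
at `t = Δ_n`, the new values `y_j(s_{n+1})`. -/
def step (γ ρ α : ℝ) (σ : St) : St where
  s := σ.s + DeltaOf γ ρ α σ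
  y := fun j =>
    if j ≤ kstarOf σ then
      max (σ.y j + DeltaOf γ ρ α σ * lam γ ρ ((j : ℤ) - (mOf γ ρ α σ : ℤ)) / γ) 0
    else 0

/-- The state after `n` steps: `(state γ ρ α n).s = s_n` and `(state γ ρ α n).y j = y_j(s_n)`.
Initially `s_0 = 0` and `y_j(0) = max (α − j) 0`. -/
def state (γ ρ α : ℝ) (n : ℕ) : St :=
  (step γ ρ α)^[n] ⟨0, fun j => max (α - j) 0⟩

/-- The index `n` of the interval `[s_n, s_{n+1}]` used to evaluate `y_j` at time `t`. -/
def idxAt (γ ρ α : ℝ) (t : ℝ) : ℕ := sInf {n : ℕ | t < (state γ ρ α (n + 1)).s}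

/-- `y_j(t)`, evaluated via the piecewise linear recursion: for `s_n ≤ t ≤ s_{n+1}`,
`y_j(t) = max (y_j(s_n) + (t − s_n)·λ_{j−m_n}/γ) 0` for `j ≤ k_n^*`, and `0` for `j > k_n^*`. -/
def yAt (γ ρ α : ℝ) (j : ℕ) (t : ℝ) : ℝ :=
  let σ := state γ ρ α (idxAt γ ρ α t)
  if j ≤ kstarOf σ then
    max (σ.y j + (t - σ.s) * lam γ ρ ((j : ℤ) - (mOf γ ρ α σ : ℤ)) / γ) 0
  else 0

/-- Conditions (i)–(ii) at a state: (i) the sets defining `m_n` and `k_n` are nonempty and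
bounded, `y_j(s_n) ≤ α_n` for all `j`, and `y_j(s_n) > 0` for `m_n ≤ j ≤ k_n`;
(ii) `y_{j+1}(s_n) ≥ y_j(s_n) − 1` for all `0 ≤ j ≤ k_n`. -/
def Cond (γ ρ α : ℝ) (σ : St) : Prop :=
  {j : ℕ | σ.y j = alphaOf γ ρ α σ}.Nonempty ∧
  BddAbove {j : ℕ | σ.y j = alphaOf γ ρ α σ} ∧
  {j : ℕ | 0 < σ.y j}.Nonempty ∧
  BddAbove {j : ℕ | 0 < σ.y j} ∧
  (∀ j : ℕ, σ.y j ≤ alphaOf γ ρ α σ) ∧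
  (∀ j : ℕ, mOf γ ρ α σ ≤ j → j ≤ kOf σ → 0 < σ.y j) ∧
  (∀ j : ℕ, j ≤ kOf σ → σ.y j - 1 ≤ σ.y (j + 1))

/-- `t_j = inf { t ∈ [0, t*) : y_j(t) = 1 }`, where `t < t* = Σ_n Δ_n = sup_n s_n` is
expressed as `∃ n, t < s_n`. -/
def tHit (γ ρ α : ℝ) (j : ℕ) : ℝ :=
  sInf {t : ℝ | 0 ≤ t ∧ (∃ n : ℕ, t < (state γ ρ α n).s) ∧ yAt γ ρ α j t = 1}


section Aux

/-- `u_k = α - f^[k] r₂`, defined recursively. -/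
def uu (γ α : ℝ) : ℕ → ℝ
  | 0 => α - (1 + 1/(2+γ))
  | k+1 => (α - (1 + 1/(2+γ))) - (1+γ)/(2+γ) * uu γ α k

/-- `s_{2k+2}` in the dynamical system. -/
def sA (γ α : ℝ) : ℕ → ℝ
  | 0 => 2 - α + 1/(2+γ)
  | k+1 => sA γ α k + uu γ α k + (1 - uu γ α k * (3+3*γ+γ^2))/(2+γ)

variable {γ α : ℝ} (hγ : 0 < γ) (hα1 : 1 + 1/(2+γ) < α) (hα2 : α < 1 + 1/(2+γ) + 1/(3+3*γ+γ^2))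

lemma gam_two (γ : ℝ) : gam γ 2 = γ * (2 + γ) := by
  simp [gam]; ring_nf

lemma gam_three (γ : ℝ) : gam γ 3 = γ * (3+3*γ+γ^2) := by
  simp [gam]; ring

lemma lam_zero (γ : ℝ) : lam γ 0 0 = 0 := by simp [lam]
lemma lam_one (γ : ℝ) : lam γ 0 1 = γ := by simp [lam]
lemma lam_two (γ : ℝ) : lam γ 0 2 = γ * (2+γ) := by simp [lam]; ring
lemma lam_three (γ : ℝ) : lam γ 0 3 = γ * (3+3*γ+γ^2) := by
  simp [lam]; ring

include hγ

lemma twog_pos : (0:ℝ) < 2 + γ := by linarith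
lemma threeg_pos : (0:ℝ) < 3+3*γ+γ^2 := by nlinarith

include hα1 in
lemma alpha_gt : (1:ℝ) < α := by
  have := twog_pos hγ
  have : (0:ℝ) < 1/(2+γ) := by positivity
  linarith

include hα2 in
lemma alpha_lt : α < 2 := by
  have h2 := twog_pos hγ
  have h3 := threeg_pos hγ
  have e1 : 1/(2+γ) < 1/2 := by
    rw [div_lt_div_iff₀ h2 (by norm_num)]; linarith
  have e2 : 1/(3+3*γ+γ^2) < 1/3 := by
    rw [div_lt_div_iff₀ h3 (by norm_num)]; nlinarith
  linarith

include hα1 hα2 in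
/-- `0 < u_k ≤ α - r₂` for all `k`, and `u_k < α - r₂` for `k ≥ 1`. -/
lemma uu_pos_le : ∀ k, 0 < uu γ α k ∧ uu γ α k ≤ α - (1 + 1/(2+γ)) := by
  have h2 := twog_pos hγ
  have hl0 : (0:ℝ) < (1+γ)/(2+γ) := by positivity
  have hl1 : (1+γ)/(2+γ) < 1 := by rw [div_lt_one h2]; linarith
  have hr : 0 < α - (1 + 1/(2+γ)) := by linarith
  intro k; induction k with
  | zero => exact ⟨hr, le_refl _⟩
  | succ k ih =>
    constructor
    · have : (1+γ)/(2+γ) * uu γ α k < 1 * (α - (1 + 1/(2+γ))) := by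
        rcases ih with ⟨h1, h2'⟩
        calc (1+γ)/(2+γ) * uu γ α k ≤ (1+γ)/(2+γ) * (α - (1 + 1/(2+γ))) := by
              apply mul_le_mul_of_nonneg_left h2' (le_of_lt hl0)
          _ < 1 * (α - (1 + 1/(2+γ))) := by apply mul_lt_mul_of_pos_right hl1 hr
      show 0 < (α - (1 + 1/(2+γ))) - (1+γ)/(2+γ) * uu γ α k
      linarith
    · have : 0 < (1+γ)/(2+γ) * uu γ α k := mul_pos hl0 ih.1
      show (α - (1 + 1/(2+γ))) - (1+γ)/(2+γ) * uu γ α k ≤ _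
      linarith

include hα1 hα2 in
lemma uu_lt : ∀ k, uu γ α k < 1/(3+3*γ+γ^2) := by
  intro k
  have := (uu_pos_le hγ hα1 hα2 k).2
  linarith

end Aux
section StepMachinery

variable {γ α : ℝ} (hγ : 0 < γ) (hα1 : 1 + 1/(2+γ) < α) (hα2 : α < 1 + 1/(2+γ) + 1/(3+3*γ+γ^2))

lemma alphaOf_zero (σ : St) : alphaOf γ 0 α σ = α := by simp [alphaOf]

lemma mOf_eq_of (σ : St) (m : ℕ) (h1 : σ.y m = α) (h2 : ∀ j, m < j → σ.y j ≠ α) :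
    mOf γ 0 α σ = m := by
  apply IsGreatest.csSup_eq
  constructor
  · simpa [Set.mem_setOf_eq, alphaOf_zero] using h1
  · intro j hj
    by_contra hc; push_neg at hc
    exact h2 j hc (by simpa [Set.mem_setOf_eq, alphaOf_zero] using hj)

lemma kOf_eq_of (σ : St) (k : ℕ) (h1 : 0 < σ.y k) (h2 : ∀ j, k < j → σ.y j = 0) :
    kOf σ = k := by
  apply IsGreatest.csSup_eq
  constructor
  · exact h1
  · intro j hj
    by_contra hc; push_neg at hc
    rw [Set.mem_setOf_eq, h2 j hc] at hj; exact lt_irrefl 0 hj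

lemma DeltaOf_eq_of (σ : St) (v : ℝ) (j0 : ℕ)
    (hj0 : j0 ∈ Set.Ioc (mOf γ 0 α σ) (kstarOf σ)) (hv : deltaOf γ 0 α σ j0 = v)
    (hlb : ∀ j ∈ Set.Ioc (mOf γ 0 α σ) (kstarOf σ), v ≤ deltaOf γ 0 α σ j) :
    DeltaOf γ 0 α σ = v := by
  apply IsLeast.csInf_eq
  constructor
  · exact ⟨j0, hj0, hv⟩
  · rintro x ⟨j, hj, rfl⟩; exact hlb j hj

include hγ hα1 hα2 in
lemma key1 : (1+γ)*(α-1) < 1 := by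
  have h2 := twog_pos hγ
  have h3 := threeg_pos hγ
  have hA2 : α - 1 < (1*(3+3*γ+γ^2) + (2+γ)*1) / ((2+γ)*(3+3*γ+γ^2)) := by
    rw [← div_add_div _ _ (ne_of_gt h2) (ne_of_gt h3)]; linarith
  rw [lt_div_iff₀ (by positivity)] at hA2
  nlinarith [hA2, hγ, sq_nonneg γ, mul_pos h2 h3]

end StepMachinery
section Invariants

/-- Invariant at even steps `s_{2k+2}`. -/
def InvA (γ α : ℝ) (k : ℕ) (σ : St) : Prop :=
  σ.s = sA γ α k ∧ σ.y k = α ∧ σ.y (k+1) = α - uu γ α k ∧ σ.y (k+2) = 1 ∧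
  ∀ j, k+3 ≤ j → σ.y j = 0

/-- Invariant at odd steps `s_{2k+3}`. -/
def InvB (γ α : ℝ) (k : ℕ) (σ : St) : Prop :=
  σ.s = sA γ α k + uu γ α k ∧ σ.y (k+1) = α ∧ σ.y (k+2) = 1 + uu γ α k * (2+γ) ∧
  σ.y (k+3) = uu γ α k * (3+3*γ+γ^2) ∧ ∀ j, k+4 ≤ j → σ.y j = 0

variable {γ α : ℝ} (hγ : 0 < γ) (hα1 : 1 + 1/(2+γ) < α) (hα2 : α < 1 + 1/(2+γ) + 1/(3+3*γ+γ^2))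

include hγ hα1 hα2 in
lemma stepA (k : ℕ) (σ : St) (h : InvA γ α k σ) :
    mOf γ 0 α σ = k ∧ kOf σ = k+2 ∧ kstarOf σ = k+3 ∧ DeltaOf γ 0 α σ = uu γ α k ∧
    InvB γ α k (step γ 0 α σ) := by
  obtain ⟨hs, hyk, hyk1, hyk2, hyz⟩ := h
  have h2 := twog_pos hγ
  have h3 := threeg_pos hγ
  have ha1 := alpha_gt hγ hα1
  have hu := uu_pos_le hγ hα1 hα2 k
  have hult := uu_lt hγ hα1 hα2 k
  have hm : mOf γ 0 α σ = k := by
    apply mOf_eq_of σ k hyk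
    intro j hj
    rcases (show j = k+1 ∨ j = k+2 ∨ k+3 ≤ j by omega) with h | h | h
    · rw [h, hyk1]; linarith [hu.1]
    · rw [h, hyk2]; linarith
    · rw [hyz j h]; linarith
  have hk : kOf σ = k+2 := by
    apply kOf_eq_of σ (k+2) (by rw [hyk2]; norm_num)
    intro j hj; exact hyz j (by omega)
  have hks : kstarOf σ = k+3 := by
    rw [kstarOf, hk, hyk2, if_neg (lt_irrefl 1)]
  -- delta values
  have hd1 : deltaOf γ 0 α σ (k+1) = uu γ α k := by
    rw [deltaOf, if_neg (by omega : ¬ k+1 = kstarOf σ), hm, alphaOf_zero, hyk1,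
      show ((k+1 : ℕ) : ℤ) - (k : ℤ) = 1 by push_cast; ring, lam_one]
    rw [sub_zero, sub_sub_cancel, mul_div_assoc, div_self (ne_of_gt hγ), mul_one]
  have hd2 : deltaOf γ 0 α σ (k+2) = (α - 1)/(2+γ) := by
    rw [deltaOf, if_neg (by omega : ¬ k+2 = kstarOf σ), hm, alphaOf_zero, hyk2,
      show ((k+2 : ℕ) : ℤ) - (k : ℤ) = 2 by push_cast; ring, lam_two, sub_zero]
    rw [div_eq_div_iff (by positivity) (ne_of_gt (twog_pos hγ))]
    ring
  have hd3 : deltaOf γ 0 α σ (k+3) = 1/(3+3*γ+γ^2) := by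
    rw [deltaOf, if_pos hks.symm, hks, hyz (k+3) le_rfl, hm,
      show ((k+3 : ℕ) : ℤ) - (k : ℤ) = 3 by push_cast; ring, lam_three, sub_zero, one_mul]
    rw [div_eq_div_iff (by positivity) (ne_of_gt (threeg_pos hγ))]
    ring
  have hkey := key1 hγ hα1 hα2
  have hΔ : DeltaOf γ 0 α σ = uu γ α k := by
    apply DeltaOf_eq_of σ _ (k+1)
      (by rw [hm, hks]; exact Set.mem_Ioc.mpr ⟨by omega, by omega⟩) hd1
    intro j hj
    rw [hm, hks, Set.mem_Ioc] at hj
    rcases (show j = k+1 ∨ j = k+2 ∨ j = k+3 by omega) with h | h | h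
    · rw [h, hd1]
    · rw [h, hd2]
      rw [le_div_iff₀ h2]
      -- u(2+γ) ≤ α - 1, from u ≤ α-1-1/(2+γ) and (1+γ)(α-1) < 1
      have h1 : uu γ α k ≤ α - 1 - 1/(2+γ) := by have := hu.2; linarith
      have : uu γ α k * (2+γ) ≤ (α - 1 - 1/(2+γ))*(2+γ) :=
        mul_le_mul_of_nonneg_right h1 (le_of_lt h2)
      have e : (α - 1 - 1/(2+γ))*(2+γ) = (α-1)*(2+γ) - 1 := by field_simp
      nlinarith
    · rw [h, hd3]; linarith
  refine ⟨hm, hk, hks, hΔ, ?_, ?_, ?_, ?_, ?_⟩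
  · show σ.s + DeltaOf γ 0 α σ = _
    rw [hs, hΔ]
  · show (if k+1 ≤ kstarOf σ then _ else _) = α
    rw [if_pos (by omega : k+1 ≤ kstarOf σ), hΔ, hm, hyk1,
      show ((k+1 : ℕ) : ℤ) - (k : ℤ) = 1 by push_cast; ring, lam_one]
    rw [mul_div_assoc, div_self (ne_of_gt hγ), mul_one]
    rw [show α - uu γ α k + uu γ α k = α by ring, max_eq_left (by linarith)]
  · show (if k+2 ≤ kstarOf σ then _ else _) = _
    rw [if_pos (by omega : k+2 ≤ kstarOf σ), hΔ, hm, hyk2,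
      show ((k+2 : ℕ) : ℤ) - (k : ℤ) = 2 by push_cast; ring, lam_two]
    rw [show uu γ α k * (γ * (2+γ)) / γ = uu γ α k * (2+γ) * (γ/γ) by ring,
      div_self (ne_of_gt hγ), mul_one]
    rw [max_eq_left (by nlinarith [hu.1])]
  · show (if k+3 ≤ kstarOf σ then _ else _) = _
    rw [if_pos (by omega : k+3 ≤ kstarOf σ), hΔ, hm, hyz (k+3) le_rfl,
      show ((k+3 : ℕ) : ℤ) - (k : ℤ) = 3 by push_cast; ring, lam_three]
    rw [show uu γ α k * (γ * (3+3*γ+γ^2)) / γ = uu γ α k * (3+3*γ+γ^2) * (γ/γ) by ring,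
      div_self (ne_of_gt hγ), mul_one, zero_add]
    rw [max_eq_left (by nlinarith [hu.1])]
  · intro j hj
    show (if j ≤ kstarOf σ then _ else _) = 0
    rw [if_neg (by omega : ¬ j ≤ kstarOf σ)]

end Invariants
section StepB
variable {γ α : ℝ} (hγ : 0 < γ) (hα1 : 1 + 1/(2+γ) < α) (hα2 : α < 1 + 1/(2+γ) + 1/(3+3*γ+γ^2))

include hγ hα1 hα2 in
lemma stepB (k : ℕ) (σ : St) (h : InvB γ α k σ) :
    mOf γ 0 α σ = k+1 ∧ kOf σ = k+3 ∧ kstarOf σ = k+3 ∧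
    DeltaOf γ 0 α σ = (1 - uu γ α k * (3+3*γ+γ^2))/(2+γ) ∧
    InvA γ α (k+1) (step γ 0 α σ) := by
  obtain ⟨hs, hyk1, hyk2, hyk3, hyz⟩ := h
  have h2 := twog_pos hγ
  have h3 := threeg_pos hγ
  have ha1 := alpha_gt hγ hα1
  have hu := uu_pos_le hγ hα1 hα2 k
  have hult := uu_lt hγ hα1 hα2 k
  have hkey := key1 hγ hα1 hα2
  have huP3 : uu γ α k * (3+3*γ+γ^2) < 1 := by
    rw [← lt_div_iff₀ h3]; exact hult
  have hu2 : uu γ α k * (2+γ) ≤ (α-1)*(2+γ) - 1 := by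
    have h1 : uu γ α k ≤ α - 1 - 1/(2+γ) := by have := hu.2; linarith
    have : uu γ α k * (2+γ) ≤ (α - 1 - 1/(2+γ))*(2+γ) :=
      mul_le_mul_of_nonneg_right h1 (le_of_lt h2)
    have e : (α - 1 - 1/(2+γ))*(2+γ) = (α-1)*(2+γ) - 1 := by field_simp
    linarith
  have hu2' : uu γ α k * (2+γ) < α - 1 := by nlinarith
  have hm : mOf γ 0 α σ = k+1 := by
    apply mOf_eq_of σ (k+1) hyk1
    intro j hj
    rcases (show j = k+2 ∨ j = k+3 ∨ k+4 ≤ j by omega) with h | h | h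
    · rw [h, hyk2]; linarith
    · rw [h, hyk3]; linarith
    · rw [hyz j h]; linarith
  have hk : kOf σ = k+3 := by
    apply kOf_eq_of σ (k+3) (by rw [hyk3]; exact mul_pos hu.1 h3)
    intro j hj; exact hyz j (by omega)
  have hks : kstarOf σ = k+3 := by
    rw [kstarOf, hk, hyk3, if_pos huP3]
  have hd2 : deltaOf γ 0 α σ (k+2) = α - 1 - uu γ α k * (2+γ) := by
    rw [deltaOf, if_neg (by omega : ¬ k+2 = kstarOf σ), hm, alphaOf_zero, hyk2,
      show ((k+2 : ℕ) : ℤ) - ((k+1 : ℕ) : ℤ) = 1 by push_cast; ring, lam_one, sub_zero]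
    rw [mul_div_assoc, div_self (ne_of_gt hγ), mul_one]
    ring
  have hd3 : deltaOf γ 0 α σ (k+3) = (1 - uu γ α k * (3+3*γ+γ^2))/(2+γ) := by
    rw [deltaOf, if_pos hks.symm, hks, hyk3, hm,
      show ((k+3 : ℕ) : ℤ) - ((k+1 : ℕ) : ℤ) = 2 by push_cast; ring, lam_two]
    rw [div_eq_div_iff (by positivity) (ne_of_gt h2)]
    ring
  have hΔ : DeltaOf γ 0 α σ = (1 - uu γ α k * (3+3*γ+γ^2))/(2+γ) := by
    apply DeltaOf_eq_of σ _ (k+3)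
      (by rw [hm, hks]; exact Set.mem_Ioc.mpr ⟨by omega, by omega⟩) hd3
    intro j hj
    rw [hm, hks, Set.mem_Ioc] at hj
    rcases (show j = k+2 ∨ j = k+3 by omega) with h | h
    · rw [h, hd2, div_le_iff₀ h2]
      nlinarith [hu.1]
    · rw [h, hd3]
  have hΔpos : 0 < DeltaOf γ 0 α σ := by
    rw [hΔ]; exact div_pos (by linarith) h2
  refine ⟨hm, hk, hks, hΔ, ?_, ?_, ?_, ?_, ?_⟩
  · show σ.s + DeltaOf γ 0 α σ = sA γ α (k+1)
    rw [hs, hΔ]; rfl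
  · show (if k+1 ≤ kstarOf σ then _ else _) = α
    rw [if_pos (by omega : k+1 ≤ kstarOf σ), hm, hyk1,
      show ((k+1 : ℕ) : ℤ) - ((k+1 : ℕ) : ℤ) = 0 by push_cast; ring, lam_zero]
    rw [mul_zero, zero_div, add_zero, max_eq_left (by linarith)]
  · show (if k+2 ≤ kstarOf σ then _ else _) = α - uu γ α (k+1)
    rw [if_pos (by omega : k+2 ≤ kstarOf σ), hΔ, hm, hyk2,
      show ((k+1+1 : ℕ) : ℤ) - ((k+1 : ℕ) : ℤ) = 1 by push_cast; ring, lam_one]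
    rw [mul_div_assoc, div_self (ne_of_gt hγ), mul_one]
    rw [max_eq_left (by nlinarith [hu.1, huP3])]
    show _ = α - ((α - (1 + 1/(2+γ))) - (1+γ)/(2+γ) * uu γ α k)
    field_simp
    ring
  · show (if k+3 ≤ kstarOf σ then _ else _) = 1
    rw [if_pos (by omega : k+3 ≤ kstarOf σ), hΔ, hm, hyk3,
      show ((k+1+2 : ℕ) : ℤ) - ((k+1 : ℕ) : ℤ) = 2 by push_cast; ring, lam_two]
    rw [show (1 - uu γ α k * (3+3*γ+γ^2))/(2+γ) * (γ * (2+γ)) / γ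
        = (1 - uu γ α k * (3+3*γ+γ^2)) * ((2+γ)/(2+γ)) * (γ/γ) by ring,
      div_self (ne_of_gt hγ), div_self (ne_of_gt h2), mul_one, mul_one]
    rw [show uu γ α k * (3+3*γ+γ^2) + (1 - uu γ α k * (3+3*γ+γ^2)) = 1 by ring]
    exact max_eq_left (by norm_num)
  · intro j hj
    show (if j ≤ kstarOf σ then _ else _) = 0
    rw [if_neg (by omega : ¬ j ≤ kstarOf σ)]
end StepB
section Base
variable {γ α : ℝ} (hγ : 0 < γ) (hα1 : 1 + 1/(2+γ) < α) (hα2 : α < 1 + 1/(2+γ) + 1/(3+3*γ+γ^2))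

lemma state_succ (γ ρ α : ℝ) (n : ℕ) :
    state γ ρ α (n+1) = step γ ρ α (state γ ρ α n) :=
  Function.iterate_succ_apply' _ _ _

lemma state_zero (γ ρ α : ℝ) : state γ ρ α 0 = ⟨0, fun j => max (α - j) 0⟩ := rfl

include hγ hα1 hα2 in
lemma st0 : mOf γ 0 α (state γ 0 α 0) = 0 ∧ kOf (state γ 0 α 0) = 1 ∧
    kstarOf (state γ 0 α 0) = 1 ∧ DeltaOf γ 0 α (state γ 0 α 0) = 2 - α ∧
    (state γ 0 α 1).s = 2 - α ∧ (state γ 0 α 1).y 0 = α ∧ (state γ 0 α 1).y 1 = 1 ∧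
    (∀ j, 2 ≤ j → (state γ 0 α 1).y j = 0) := by
  have ha1 := alpha_gt hγ hα1
  have ha2 := alpha_lt hγ hα2
  set σ := state γ 0 α 0 with hσ
  have hy : ∀ j : ℕ, σ.y j = max (α - j) 0 := fun j => rfl
  have hy0 : σ.y 0 = α := by rw [hy]; simp; linarith
  have hy1 : σ.y 1 = α - 1 := by rw [hy]; simp [max_eq_left]; linarith
  have hyz : ∀ j, 2 ≤ j → σ.y j = 0 := by
    intro j hj
    rw [hy, max_eq_right]
    have : (2:ℝ) ≤ (j:ℝ) := by exact_mod_cast hj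
    linarith
  have hm : mOf γ 0 α σ = 0 := by
    apply mOf_eq_of σ 0 hy0
    intro j hj
    rcases (show j = 1 ∨ 2 ≤ j by omega) with h | h
    · rw [h, hy1]; linarith
    · rw [hyz j h]; linarith
  have hk : kOf σ = 1 := by
    apply kOf_eq_of σ 1 (by rw [hy1]; linarith)
    intro j hj; exact hyz j (by omega)
  have hks : kstarOf σ = 1 := by
    rw [kstarOf, hk, hy1, if_pos (by linarith)]
  have hd1 : deltaOf γ 0 α σ 1 = 2 - α := by
    rw [deltaOf, if_pos hks.symm, hks, hy1, hm,
      show ((1:ℕ):ℤ) - ((0:ℕ):ℤ) = 1 by norm_num, lam_one]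
    rw [mul_div_assoc, div_self (ne_of_gt hγ), mul_one]
    ring
  have hΔ : DeltaOf γ 0 α σ = 2 - α := by
    apply DeltaOf_eq_of σ _ 1 (by rw [hm, hks]; exact Set.mem_Ioc.mpr ⟨by omega, le_rfl⟩) hd1
    intro j hj
    rw [hm, hks, Set.mem_Ioc] at hj
    rw [(show j = 1 by omega), hd1]
  have hst : state γ 0 α 1 = step γ 0 α σ := state_succ γ 0 α 0
  refine ⟨hm, hk, hks, hΔ, ?_, ?_, ?_, ?_⟩
  · rw [hst]; show σ.s + DeltaOf γ 0 α σ = 2 - α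
    rw [hΔ, hσ, state_zero]; simp
  · rw [hst]; show (if 0 ≤ kstarOf σ then max (σ.y 0 + DeltaOf γ 0 α σ * lam γ 0 (((0:ℕ):ℤ) - (mOf γ 0 α σ : ℤ)) / γ) 0 else (0:ℝ)) = α
    rw [if_pos (Nat.zero_le _), hΔ, hm, hy0,
      show ((0:ℕ):ℤ) - ((0:ℕ):ℤ) = 0 by norm_num, lam_zero]
    rw [mul_zero, zero_div, add_zero, max_eq_left (by linarith)]
  · rw [hst]; show (if 1 ≤ kstarOf σ then _ else _) = 1
    rw [if_pos (by omega : 1 ≤ kstarOf σ), hΔ, hm, hy1,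
      show ((1:ℕ):ℤ) - ((0:ℕ):ℤ) = 1 by norm_num, lam_one]
    rw [mul_div_assoc, div_self (ne_of_gt hγ), mul_one]
    rw [show α - 1 + (2-α) = 1 by ring, max_eq_left (by norm_num)]
  · intro j hj
    rw [hst]; show (if j ≤ kstarOf σ then _ else _) = 0
    rw [if_neg (by omega : ¬ j ≤ kstarOf σ)]

include hγ hα1 hα2 in
lemma st1 : mOf γ 0 α (state γ 0 α 1) = 0 ∧ kOf (state γ 0 α 1) = 1 ∧
    kstarOf (state γ 0 α 1) = 2 ∧ DeltaOf γ 0 α (state γ 0 α 1) = 1/(2+γ) ∧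
    InvA γ α 0 (state γ 0 α 2) := by
  obtain ⟨_, _, _, _, hs1, hy0, hy1, hyz⟩ := st0 hγ hα1 hα2
  have h2 := twog_pos hγ
  have ha1 := alpha_gt hγ hα1
  set σ := state γ 0 α 1 with hσ
  have hm : mOf γ 0 α σ = 0 := by
    apply mOf_eq_of σ 0 hy0
    intro j hj
    rcases (show j = 1 ∨ 2 ≤ j by omega) with h | h
    · rw [h, hy1]; linarith
    · rw [hyz j h]; linarith
  have hk : kOf σ = 1 := by
    apply kOf_eq_of σ 1 (by rw [hy1]; norm_num)
    intro j hj; exact hyz j (by omega)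
  have hks : kstarOf σ = 2 := by
    rw [kstarOf, hk, hy1, if_neg (lt_irrefl 1)]
  have hd1 : deltaOf γ 0 α σ 1 = α - 1 := by
    rw [deltaOf, if_neg (by omega : ¬ 1 = kstarOf σ), hm, alphaOf_zero, hy1,
      show ((1:ℕ):ℤ) - ((0:ℕ):ℤ) = 1 by norm_num, lam_one, sub_zero]
    rw [mul_div_assoc, div_self (ne_of_gt hγ), mul_one]
  have hd2 : deltaOf γ 0 α σ 2 = 1/(2+γ) := by
    rw [deltaOf, if_pos hks.symm, hks, hyz 2 le_rfl, hm,
      show ((2:ℕ):ℤ) - ((0:ℕ):ℤ) = 2 by norm_num, lam_two]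
    rw [div_eq_div_iff (by positivity) (ne_of_gt h2)]
    ring
  have hΔ : DeltaOf γ 0 α σ = 1/(2+γ) := by
    apply DeltaOf_eq_of σ _ 2 (by rw [hm, hks]; exact Set.mem_Ioc.mpr ⟨by omega, le_rfl⟩) hd2
    intro j hj
    rw [hm, hks, Set.mem_Ioc] at hj
    rcases (show j = 1 ∨ j = 2 by omega) with h | h
    · rw [h, hd1]
      rw [div_le_iff₀ h2]
      have : 1/(2+γ) < α - 1 := by linarith
      rw [div_lt_iff₀ h2] at this
      linarith
    · rw [h, hd2]
  have hst : state γ 0 α 2 = step γ 0 α σ := state_succ γ 0 α 1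
  refine ⟨hm, hk, hks, hΔ, ?_, ?_, ?_, ?_, ?_⟩
  · rw [hst]; show σ.s + DeltaOf γ 0 α σ = sA γ α 0
    rw [hΔ, hσ, hs1]; show _ = 2 - α + 1/(2+γ); ring
  · rw [hst]; show (if 0 ≤ kstarOf σ then max (σ.y 0 + DeltaOf γ 0 α σ * lam γ 0 (((0:ℕ):ℤ) - (mOf γ 0 α σ : ℤ)) / γ) 0 else (0:ℝ)) = α
    rw [if_pos (Nat.zero_le _), hΔ, hm, hy0,
      show ((0:ℕ):ℤ) - ((0:ℕ):ℤ) = 0 by norm_num, lam_zero]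
    rw [mul_zero, zero_div, add_zero, max_eq_left (by linarith)]
  · rw [hst]; show (if 1 ≤ kstarOf σ then _ else _) = α - uu γ α 0
    rw [if_pos (by omega : 1 ≤ kstarOf σ), hΔ, hm, hy1,
      show ((1:ℕ):ℤ) - ((0:ℕ):ℤ) = 1 by norm_num, lam_one]
    rw [mul_div_assoc, div_self (ne_of_gt hγ), mul_one]
    rw [max_eq_left (by positivity)]
    show _ = α - (α - (1 + 1/(2+γ)))
    ring
  · rw [hst]; show (if 2 ≤ kstarOf σ then _ else _) = 1
    rw [if_pos (by omega : 2 ≤ kstarOf σ), hΔ, hm, hyz 2 le_rfl,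
      show ((2:ℕ):ℤ) - ((0:ℕ):ℤ) = 2 by norm_num, lam_two]
    rw [show 1/(2+γ) * (γ*(2+γ))/γ = ((2+γ)/(2+γ)) * (γ/γ) by ring,
      div_self (ne_of_gt hγ), div_self (ne_of_gt h2), mul_one, zero_add]
    rw [max_eq_left (by norm_num)]
  · intro j hj
    rw [hst]; show (if j ≤ kstarOf σ then _ else _) = 0
    rw [if_neg (by omega : ¬ j ≤ kstarOf σ)]
end Base
section Induct
variable {γ α : ℝ} (hγ : 0 < γ) (hα1 : 1 + 1/(2+γ) < α) (hα2 : α < 1 + 1/(2+γ) + 1/(3+3*γ+γ^2))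

include hγ hα1 hα2

lemma invA_state : ∀ k, InvA γ α k (state γ 0 α (2*k+2)) := by
  intro k
  induction k with
  | zero => exact (st1 hγ hα1 hα2).2.2.2.2
  | succ k ih =>
    have hB := (stepA hγ hα1 hα2 k _ ih).2.2.2.2
    rw [← state_succ] at hB
    have hA := (stepB hγ hα1 hα2 k _ hB).2.2.2.2
    rw [← state_succ] at hA
    rw [show 2*(k+1)+2 = 2*k+2+1+1 by ring]
    exact hA

lemma invB_state (k : ℕ) : InvB γ α k (state γ 0 α (2*k+3)) := by
  have hB := (stepA hγ hα1 hα2 k _ (invA_state hγ hα1 hα2 k)).2.2.2.2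
  rw [← state_succ] at hB
  rw [show 2*k+3 = 2*k+2+1 by ring]
  exact hB

omit hγ hα1 hα2 in
lemma sA_zero' : sA γ α 0 = 2 - α + 1/(2+γ) := rfl

/-- strict monotonicity of the times `s_n`. -/
lemma s_lt_succ (n : ℕ) : (state γ 0 α n).s < (state γ 0 α (n+1)).s := by
  have h2 := twog_pos hγ
  have ha2 := alpha_lt hγ hα2
  rcases (show n = 0 ∨ n = 1 ∨ (∃ k, n = 2*k+2 ∨ n = 2*k+3)
      by rcases Nat.lt_or_ge n 2 with h | h
         · omega
         · exact Or.inr (Or.inr ⟨(n-2)/2, by omega⟩)) with h | h | ⟨k, h | h⟩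
  · subst h
    rw [state_zero]
    obtain ⟨_, _, _, _, hs1, _⟩ := st0 hγ hα1 hα2
    rw [hs1]; show (0:ℝ) < 2 - α; linarith
  · subst h
    obtain ⟨_, _, _, _, hs1, _⟩ := st0 hγ hα1 hα2
    have hA := invA_state hγ hα1 hα2 0
    rw [show 2*0+2 = 2 by ring] at hA
    rw [hs1, hA.1, sA_zero']
    have : (0:ℝ) < 1/(2+γ) := by positivity
    linarith
  · subst h
    have hA := invA_state hγ hα1 hα2 k
    have hB := invB_state hγ hα1 hα2 k
    rw [show 2*k+2+1 = 2*k+3 by ring, hA.1, hB.1]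
    linarith [(uu_pos_le hγ hα1 hα2 k).1]
  · subst h
    have hB := invB_state hγ hα1 hα2 k
    have hA := invA_state hγ hα1 hα2 (k+1)
    rw [show 2*k+3+1 = 2*(k+1)+2 by ring, hB.1, hA.1]
    show _ < sA γ α k + uu γ α k + _
    have : 0 < (1 - uu γ α k * (3+3*γ+γ^2))/(2+γ) := by
      have h3 := threeg_pos hγ
      have := uu_lt hγ hα1 hα2 k
      apply div_pos _ h2
      have h4 : uu γ α k * (3+3*γ+γ^2) < 1 := (lt_div_iff₀ h3).mp this
      linarith
    linarith

lemma s_mono : StrictMono (fun n => (state γ 0 α n).s) :=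
  strictMono_nat_of_lt_succ (s_lt_succ hγ hα1 hα2)

omit hγ hα1 hα2 in
lemma s_zero : (state γ 0 α 0).s = 0 := by rw [state_zero]

lemma s_nonneg (n : ℕ) : 0 ≤ (state γ 0 α n).s := by
  rw [← s_zero (γ := γ) (α := α)]
  exact (s_mono hγ hα1 hα2).monotone (Nat.zero_le n)

/-- The times `s_n` tend to infinity. -/
lemma s_unbounded (M : ℝ) : ∃ n, M < (state γ 0 α n).s := by
  have h2 := twog_pos hγ
  have hr : 0 < α - (1 + 1/(2+γ)) := by linarith
  set c := (1 - (1+γ)/(2+γ)) * (α - (1 + 1/(2+γ))) with hc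
  have hcpos : 0 < c := by
    apply mul_pos _ hr
    have : (1+γ)/(2+γ) < 1 := by rw [div_lt_one h2]; linarith
    linarith
  have huc : ∀ k, c ≤ uu γ α k := by
    intro k
    cases k with
    | zero =>
      show c ≤ α - (1 + 1/(2+γ))
      rw [hc]
      have hl : 0 ≤ (1+γ)/(2+γ) := by positivity
      nlinarith [mul_nonneg hl (le_of_lt hr)]
    | succ k =>
      show c ≤ (α - (1 + 1/(2+γ))) - (1+γ)/(2+γ) * uu γ α k
      have h1 := (uu_pos_le hγ hα1 hα2 k).2
      have hl : 0 ≤ (1+γ)/(2+γ) := by positivity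
      have : (1+γ)/(2+γ) * uu γ α k ≤ (1+γ)/(2+γ) * (α - (1 + 1/(2+γ))) :=
        mul_le_mul_of_nonneg_left h1 hl
      rw [hc]; ring_nf; ring_nf at this; linarith
  have hsk : ∀ k, sA γ α 0 + k * c ≤ sA γ α k := by
    intro k
    induction k with
    | zero => simp
    | succ k ih =>
      have : sA γ α (k+1) = sA γ α k + uu γ α k + (1 - uu γ α k * (3+3*γ+γ^2))/(2+γ) := rfl
      have h3 := threeg_pos hγ
      have hpos : 0 ≤ (1 - uu γ α k * (3+3*γ+γ^2))/(2+γ) := by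
        have := uu_lt hγ hα1 hα2 k
        apply div_nonneg _ (le_of_lt h2)
        have h4 : uu γ α k * (3+3*γ+γ^2) < 1 := (lt_div_iff₀ h3).mp this
        linarith
      have := huc k
      push_cast
      nlinarith
  obtain ⟨k, hk⟩ := exists_nat_gt ((M - sA γ α 0)/c)
  refine ⟨2*k+2, ?_⟩
  have hA := invA_state hγ hα1 hα2 k
  rw [hA.1]
  have : (M - sA γ α 0)/c < k := hk
  rw [div_lt_iff₀ hcpos] at this
  have := hsk k
  linarith

/-- Characterisation of `idxAt`. -/
lemma idxAt_eq (m : ℕ) (t : ℝ) (h1 : (state γ 0 α m).s ≤ t) (h2 : t < (state γ 0 α (m+1)).s) :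
    idxAt γ 0 α t = m := by
  have hmem : m ∈ {n : ℕ | t < (state γ 0 α (n + 1)).s} := h2
  apply le_antisymm (Nat.sInf_le hmem)
  by_contra hc
  push_neg at hc
  have hlt : idxAt γ 0 α t ∈ {n : ℕ | t < (state γ 0 α (n + 1)).s} :=
    Nat.sInf_mem (Set.nonempty_of_mem hmem)
  have hle : idxAt γ 0 α t + 1 ≤ m := hc
  have hmono : (state γ 0 α (idxAt γ 0 α t + 1)).s ≤ (state γ 0 α m).s :=
    (s_mono hγ hα1 hα2).monotone hle
  have : t < (state γ 0 α (idxAt γ 0 α t + 1)).s := hlt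
  linarith

lemma idxAt_lt (N m : ℕ) (t : ℝ) (ht : t < (state γ 0 α N).s) (hm : idxAt γ 0 α t = m)
    (hle : (state γ 0 α m).s ≤ t) : m < N := by
  by_contra hc
  push_neg at hc
  have : (state γ 0 α N).s ≤ (state γ 0 α m).s := (s_mono hγ hα1 hα2).monotone hc
  linarith

end Induct
section Hit
variable {γ α : ℝ} (hγ : 0 < γ) (hα1 : 1 + 1/(2+γ) < α) (hα2 : α < 1 + 1/(2+γ) + 1/(3+3*γ+γ^2))

include hγ hα1 hα2

lemma idxAt_spec (t : ℝ) (ht : 0 ≤ t) :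
    (state γ 0 α (idxAt γ 0 α t)).s ≤ t ∧ t < (state γ 0 α (idxAt γ 0 α t + 1)).s := by
  obtain ⟨n, hn⟩ := s_unbounded hγ hα1 hα2 t
  have hne : {m : ℕ | t < (state γ 0 α (m + 1)).s}.Nonempty :=
    ⟨n, lt_of_lt_of_le hn ((s_mono hγ hα1 hα2).monotone (Nat.le_succ n))⟩
  have hmem : idxAt γ 0 α t ∈ {m : ℕ | t < (state γ 0 α (m + 1)).s} := Nat.sInf_mem hne
  refine ⟨?_, hmem⟩
  rcases Nat.eq_zero_or_pos (idxAt γ 0 α t) with h | h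
  · rw [h, s_zero]; exact ht
  · have hnot : idxAt γ 0 α t - 1 ∉ {m : ℕ | t < (state γ 0 α (m + 1)).s} :=
      Nat.notMem_of_lt_sInf (show idxAt γ 0 α t - 1 < idxAt γ 0 α t by omega)
    simp only [Set.mem_setOf_eq, not_lt] at hnot
    rwa [show idxAt γ 0 α t - 1 + 1 = idxAt γ 0 α t by omega] at hnot

omit hγ hα1 hα2 in
lemma yAt_eval (m j : ℕ) (t : ℝ) (hidx : idxAt γ 0 α t = m) :
    yAt γ 0 α j t =
      if j ≤ kstarOf (state γ 0 α m) then
        max ((state γ 0 α m).y j +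
          (t - (state γ 0 α m).s) * lam γ 0 ((j : ℤ) - (mOf γ 0 α (state γ 0 α m) : ℤ)) / γ) 0
      else 0 := by
  rw [yAt, hidx]

lemma yAt_hit (N j : ℕ) (hj : j ≤ kstarOf (state γ 0 α N)) (hy : (state γ 0 α N).y j = 1) :
    yAt γ 0 α j ((state γ 0 α N).s) = 1 := by
  rw [yAt_eval N j _ (idxAt_eq hγ hα1 hα2 N _ le_rfl (s_lt_succ hγ hα1 hα2 N)), if_pos hj,
    sub_self, zero_mul, zero_div, add_zero, hy]
  norm_num

lemma tHit_eq (j N : ℕ) (hN1 : yAt γ 0 α j ((state γ 0 α N).s) = 1)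
    (hlb : ∀ t, 0 ≤ t → t < (state γ 0 α N).s → yAt γ 0 α j t ≠ 1) :
    tHit γ 0 α j = (state γ 0 α N).s := by
  have hmem : (state γ 0 α N).s ∈
      {t : ℝ | 0 ≤ t ∧ (∃ n : ℕ, t < (state γ 0 α n).s) ∧ yAt γ 0 α j t = 1} :=
    ⟨s_nonneg hγ hα1 hα2 N, ⟨N+1, s_lt_succ hγ hα1 hα2 N⟩, hN1⟩
  apply le_antisymm
  · exact csInf_le ⟨0, fun t ht => ht.1⟩ hmem
  · apply le_csInf ⟨_, hmem⟩
    rintro t ⟨ht0, _, hy⟩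
    by_contra hc
    push_neg at hc
    exact hlb t ht0 hc hy

-- facts about states used in the lower bounds
lemma stA_facts (k : ℕ) : mOf γ 0 α (state γ 0 α (2*k+2)) = k ∧
    kstarOf (state γ 0 α (2*k+2)) = k+3 :=
  ⟨(stepA hγ hα1 hα2 k _ (invA_state hγ hα1 hα2 k)).1,
   (stepA hγ hα1 hα2 k _ (invA_state hγ hα1 hα2 k)).2.2.1⟩

lemma stB_facts (k : ℕ) : mOf γ 0 α (state γ 0 α (2*k+3)) = k+1 ∧
    kstarOf (state γ 0 α (2*k+3)) = k+3 :=
  ⟨(stepB hγ hα1 hα2 k _ (invB_state hγ hα1 hα2 k)).1,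
   (stepB hγ hα1 hα2 k _ (invB_state hγ hα1 hα2 k)).2.2.1⟩

lemma tHit_one : tHit γ 0 α 1 = 2 - α := by
  obtain ⟨hm0, hk0, hks0, hΔ0, hs1, hy0, hy1, hyz⟩ := st0 hγ hα1 hα2
  obtain ⟨hm1, hk1, hks1, hΔ1, _⟩ := st1 hγ hα1 hα2
  have ha2 := alpha_lt hγ hα2
  rw [← hs1]
  apply tHit_eq hγ hα1 hα2 1 1
  · exact yAt_hit hγ hα1 hα2 1 1 (by omega) hy1
  · intro t ht0 htl
    rw [hs1] at htl
    have hidx : idxAt γ 0 α t = 0 := by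
      apply idxAt_eq hγ hα1 hα2 0 t (by rw [s_zero]; exact ht0)
      rw [show (0:ℕ)+1 = 1 by rfl, hs1]; exact htl
    rw [yAt_eval 0 1 t hidx, if_pos (by omega), hm0, s_zero, sub_zero,
      show ((1:ℕ):ℤ) - ((0:ℕ):ℤ) = 1 by norm_num, lam_one,
      mul_div_assoc, div_self (ne_of_gt hγ), mul_one]
    have hy01 : (state γ 0 α 0).y 1 = α - 1 := by
      rw [state_zero]; simp [max_eq_left]; linarith [alpha_gt hγ hα1]
    apply ne_of_lt
    apply max_lt _ (by norm_num)
    rw [hy01]; linarith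

lemma tHit_two : tHit γ 0 α 2 = sA γ α 0 := by
  obtain ⟨hm0, hk0, hks0, hΔ0, hs1, hy0, hy1, hyz⟩ := st0 hγ hα1 hα2
  obtain ⟨hm1, hk1, hks1, hΔ1, hA0⟩ := st1 hγ hα1 hα2
  have h2 := twog_pos hγ
  have hA0' := hA0
  have hsA0 : (state γ 0 α 2).s = sA γ α 0 := hA0.1
  rw [← hsA0]
  apply tHit_eq hγ hα1 hα2 2 2
  · have hks2 : kstarOf (state γ 0 α 2) = 3 := by
      have := (stA_facts hγ hα1 hα2 0).2
      rwa [show 2*0+2 = 2 by rfl] at this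
    exact yAt_hit hγ hα1 hα2 2 2 (by omega) hA0.2.2.2.1
  · intro t ht0 htl
    rw [hsA0] at htl
    rcases lt_or_ge t (2-α) with h | h
    · have hidx : idxAt γ 0 α t = 0 := by
        apply idxAt_eq hγ hα1 hα2 0 t (by rw [s_zero]; exact ht0)
        rw [show (0:ℕ)+1 = 1 by rfl, hs1]; exact h
      rw [yAt_eval 0 2 t hidx, if_neg (by omega)]
      norm_num
    · have hidx : idxAt γ 0 α t = 1 := by
        apply idxAt_eq hγ hα1 hα2 1 t (by rw [hs1]; exact h)
        rw [show (1:ℕ)+1 = 2 by rfl, hsA0]; exact htl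
      rw [yAt_eval 1 2 t hidx, if_pos (by omega), hm1, hs1, hyz 2 le_rfl,
        show ((2:ℕ):ℤ) - ((0:ℕ):ℤ) = 2 by norm_num, lam_two]
      apply ne_of_lt
      apply max_lt _ (by norm_num)
      rw [show (t - (2-α)) * (γ*(2+γ))/γ = (t - (2-α)) * (2+γ) * (γ/γ) by ring,
        div_self (ne_of_gt hγ), mul_one, zero_add]
      have : t - (2-α) < 1/(2+γ) := by
        rw [sA_zero'] at htl; linarith
      calc (t - (2-α)) * (2+γ) < (1/(2+γ)) * (2+γ) := by
            exact mul_lt_mul_of_pos_right this h2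
        _ = 1 := by field_simp

lemma tHit_three_plus (k : ℕ) : tHit γ 0 α (k+3) = sA γ α (k+1) := by
  have h2 := twog_pos hγ
  have h3 := threeg_pos hγ
  have hu := uu_pos_le hγ hα1 hα2 k
  have hult := uu_lt hγ hα1 hα2 k
  have huP3 : uu γ α k * (3+3*γ+γ^2) < 1 := (lt_div_iff₀ h3).mp hult
  have hAk := invA_state hγ hα1 hα2 k
  have hBk := invB_state hγ hα1 hα2 k
  have hAk1 := invA_state hγ hα1 hα2 (k+1)
  have hsN : (state γ 0 α (2*(k+1)+2)).s = sA γ α (k+1) := hAk1.1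
  rw [← hsN]
  apply tHit_eq hγ hα1 hα2 (k+3) (2*(k+1)+2)
  · have hks : kstarOf (state γ 0 α (2*(k+1)+2)) = k+4 := by
      have := (stA_facts hγ hα1 hα2 (k+1)).2
      rwa [show (k+1)+3 = k+4 by ring] at this
    apply yAt_hit hγ hα1 hα2 _ _ (by omega)
    have := hAk1.2.2.2.1
    rwa [show (k+1)+2 = k+3 by ring] at this
  · intro t ht0 htl
    rw [hsN] at htl
    obtain ⟨hm, hm1⟩ := idxAt_spec hγ hα1 hα2 t ht0
    set m := idxAt γ 0 α t with hmdef
    have hmlt : m < 2*(k+1)+2 := by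
      by_contra hc
      push_neg at hc
      have : (state γ 0 α (2*(k+1)+2)).s ≤ (state γ 0 α m).s :=
        (s_mono hγ hα1 hα2).monotone hc
      rw [hsN] at this
      linarith
    rcases (show m = 0 ∨ m = 1 ∨ (∃ k', (m = 2*k'+2 ∧ k' ≤ k) ∨ (m = 2*k'+3 ∧ k' ≤ k))
        by rcases Nat.lt_or_ge m 2 with h | h
           · omega
           · exact Or.inr (Or.inr ⟨(m-2)/2, by omega⟩)) with h | h | ⟨k', ⟨h, hk'⟩ | ⟨h, hk'⟩⟩
    · rw [yAt_eval m (k+3) t rfl, h, if_neg (by rw [(st0 hγ hα1 hα2).2.2.1]; omega)]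
      norm_num
    · rw [yAt_eval m (k+3) t rfl, h, if_neg (by rw [(st1 hγ hα1 hα2).2.2.1]; omega)]
      norm_num
    · -- m = 2k'+2, an A-state
      rcases Nat.lt_or_ge k' k with hlt | hge
      · rw [yAt_eval m (k+3) t rfl, h,
          if_neg (by rw [(stA_facts hγ hα1 hα2 k').2]; omega)]
        norm_num
      · have hkk : k = k' := by omega
        subst hkk
        rw [yAt_eval m (k+3) t rfl, h, if_pos (by rw [(stA_facts hγ hα1 hα2 k).2]),
          (stA_facts hγ hα1 hα2 k).1, hAk.2.2.2.2 (k+3) le_rfl, hAk.1,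
          show ((k+3:ℕ):ℤ) - ((k:ℕ):ℤ) = 3 by push_cast; ring, lam_three]
        apply ne_of_lt
        apply max_lt _ (by norm_num)
        rw [show (t - sA γ α k) * (γ*(3+3*γ+γ^2))/γ
            = (t - sA γ α k) * (3+3*γ+γ^2) * (γ/γ) by ring,
          div_self (ne_of_gt hγ), mul_one, zero_add]
        have hts : t - sA γ α k < uu γ α k := by
          have := hm1
          rw [h, show 2*k+2+1 = 2*k+3 by ring] at this
          rw [hBk.1] at this
          linarith
        calc (t - sA γ α k) * (3+3*γ+γ^2) < uu γ α k * (3+3*γ+γ^2) :=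
              mul_lt_mul_of_pos_right hts h3
          _ < 1 := huP3
    · -- m = 2k'+3, a B-state
      rcases Nat.lt_or_ge k' k with hlt | hge
      · rw [yAt_eval m (k+3) t rfl, h,
          if_neg (by rw [(stB_facts hγ hα1 hα2 k').2]; omega)]
        norm_num
      · have hkk : k = k' := by omega
        subst hkk
        rw [yAt_eval m (k+3) t rfl, h, if_pos (by rw [(stB_facts hγ hα1 hα2 k).2]),
          (stB_facts hγ hα1 hα2 k).1, hBk.2.2.2.1, hBk.1,
          show ((k+3:ℕ):ℤ) - ((k+1:ℕ):ℤ) = 2 by push_cast; ring, lam_two]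
        apply ne_of_lt
        apply max_lt _ (by norm_num)
        rw [show (t - (sA γ α k + uu γ α k)) * (γ*(2+γ))/γ
            = (t - (sA γ α k + uu γ α k)) * (2+γ) * (γ/γ) by ring,
          div_self (ne_of_gt hγ), mul_one]
        have hts : t - (sA γ α k + uu γ α k) < (1 - uu γ α k * (3+3*γ+γ^2))/(2+γ) := by
          have := hm1
          rw [h, show 2*k+3+1 = 2*(k+1)+2 by ring] at this
          rw [hAk1.1] at this
          have hsA : sA γ α (k+1)
              = sA γ α k + uu γ α k + (1 - uu γ α k * (3+3*γ+γ^2))/(2+γ) := rfl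
          linarith
        have : (t - (sA γ α k + uu γ α k)) * (2+γ) < 1 - uu γ α k * (3+3*γ+γ^2) := by
          calc (t - (sA γ α k + uu γ α k)) * (2+γ)
              < ((1 - uu γ α k * (3+3*γ+γ^2))/(2+γ)) * (2+γ) :=
                mul_lt_mul_of_pos_right hts h2
            _ = 1 - uu γ α k * (3+3*γ+γ^2) := by field_simp
        linarith
end Hit
section Limit
variable {γ α : ℝ} (hγ : 0 < γ) (hα1 : 1 + 1/(2+γ) < α) (hα2 : α < 1 + 1/(2+γ) + 1/(3+3*γ+γ^2))

include hγ

lemma gdiv2 : γ / gam γ 2 = 1/(2+γ) := by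
  rw [gam_two]
  have h2 := twog_pos hγ
  field_simp

lemma gdiv3 : γ / gam γ 3 = 1/(3+3*γ+γ^2) := by
  rw [gam_three]
  have h3 := threeg_pos hγ
  field_simp

omit hγ in
lemma uu_iterF (k : ℕ) :
    α - (fun x : ℝ => (1 + 1/(2+γ)) + (1 + γ) / (2 + γ) * (α - x))^[k] (1 + 1/(2+γ))
      = uu γ α k := by
  induction k with
  | zero => rfl
  | succ k ih =>
    rw [Function.iterate_succ_apply']
    have hF : (fun x : ℝ => (1 + 1/(2+γ)) + (1 + γ) / (2 + γ) * (α - x))^[k] (1 + 1/(2+γ))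
        = α - uu γ α k := by linarith [ih]
    rw [hF]
    show α - ((1 + 1/(2+γ)) + (1+γ)/(2+γ) * (α - (α - uu γ α k)))
        = (α - (1 + 1/(2+γ))) - (1+γ)/(2+γ) * uu γ α k
    ring

lemma uu_iter (k : ℕ) :
    α - (fun x : ℝ => (1 + γ / gam γ 2) + (1 + γ) / (2 + γ) * (α - x))^[k] (1 + γ / gam γ 2)
      = uu γ α k := by
  simp only [gdiv2 hγ]
  exact uu_iterF k

include hα1 hα2 in
lemma tHit_ge2 (k : ℕ) : tHit γ 0 α (k+2) = sA γ α k := by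
  cases k with
  | zero => exact tHit_two hγ hα1 hα2
  | succ k =>
    rw [show k+1+2 = k+3 by ring]
    exact tHit_three_plus hγ hα1 hα2 k

include hα1 hα2 in
lemma uu_closed (k : ℕ) :
    uu γ α k = (α - (1 + 1/(2+γ)))/(1 + (1+γ)/(2+γ))
      + (-((1+γ)/(2+γ)))^k *
        (uu γ α 0 - (α - (1 + 1/(2+γ)))/(1 + (1+γ)/(2+γ))) := by
  have h2 := twog_pos hγ
  set L := (1+γ)/(2+γ) with hL
  set U := (α - (1 + 1/(2+γ)))/(1 + L) with hU
  have hfix : U = (α - (1 + 1/(2+γ))) - L * U := by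
    rw [hU, hL]
    field_simp
    ring
  induction k with
  | zero => simp
  | succ k ih =>
    have : uu γ α (k+1) = (α - (1 + 1/(2+γ))) - L * uu γ α k := rfl
    rw [this, ih]
    rw [pow_succ]
    nlinarith [hfix]

include hα1 hα2 in
lemma uu_tendsto :
    Filter.Tendsto (uu γ α) Filter.atTop
      (nhds ((α - (1 + 1/(2+γ)))/(1 + (1+γ)/(2+γ)))) := by
  have h2 := twog_pos hγ
  have habs : |(-((1+γ)/(2+γ)))| < 1 := by
    rw [abs_neg, abs_of_nonneg (by positivity)]
    rw [div_lt_one h2]; linarith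
  have hpow : Filter.Tendsto (fun k : ℕ => (-((1+γ)/(2+γ)))^k) Filter.atTop (nhds 0) :=
    tendsto_pow_atTop_nhds_zero_of_abs_lt_one habs
  have := (hpow.mul_const
    (uu γ α 0 - (α - (1 + 1/(2+γ)))/(1 + (1+γ)/(2+γ)))).const_add
    ((α - (1 + 1/(2+γ)))/(1 + (1+γ)/(2+γ)))
  rw [zero_mul, add_zero] at this
  apply this.congr
  intro k
  rw [← uu_closed hγ hα1 hα2 k]

end Limit
/-- Regime 2 increments.  Suppose `ρ = 0` and `r_2 < α < r_3`, where
`r_2 = 1 + γ/γ_2` and `r_3 = r_2 + γ/γ_3`.  Let `ℓ = (1+γ)/(2+γ)` and `f(x) = r_2 + ℓ(α−x)`.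
Then `t_1 = 2 − α`, `t_2 − t_1 = γ/γ_2`, for every `j ≥ 3`
`t_j − t_{j−1} = (α − f^{j−3}(r_2)) + (1 − (3+3γ+γ²)(α − f^{j−3}(r_2)))/(2+γ)`, and as
`j → ∞` these increments converge to
`β_∞ = (α − r*) + (1 − (3+3γ+γ²)(α − r*))/(2+γ)` with `r* = (r_2 + ℓα)/(1+ℓ)`. -/
theorem regime_two_increments (γ α : ℝ) (hγ : 0 < γ)
    (hα1 : 1 + γ / gam γ 2 < α) (hα2 : α < 1 + γ / gam γ 2 + γ / gam γ 3) :
    tHit γ 0 α 1 = 2 - α ∧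
    tHit γ 0 α 2 - tHit γ 0 α 1 = γ / gam γ 2 ∧
    (∀ j : ℕ, 3 ≤ j →
      tHit γ 0 α j - tHit γ 0 α (j - 1) =
        (α - (fun x : ℝ => (1 + γ / gam γ 2) + (1 + γ) / (2 + γ) * (α - x))^[j - 3]
            (1 + γ / gam γ 2)) +
        (1 - (3 + 3 * γ + γ ^ 2) *
            (α - (fun x : ℝ => (1 + γ / gam γ 2) + (1 + γ) / (2 + γ) * (α - x))^[j - 3]
              (1 + γ / gam γ 2))) / (2 + γ)) ∧
    Filter.Tendsto (fun j : ℕ => tHit γ 0 α (j + 1) - tHit γ 0 α j) Filter.atTop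
      (nhds ((α - ((1 + γ / gam γ 2) + (1 + γ) / (2 + γ) * α) / (1 + (1 + γ) / (2 + γ))) +
        (1 - (3 + 3 * γ + γ ^ 2) *
            (α - ((1 + γ / gam γ 2) + (1 + γ) / (2 + γ) * α) / (1 + (1 + γ) / (2 + γ)))) /
          (2 + γ))) := by
  have h2 := twog_pos hγ
  have h3 := threeg_pos hγ
  have hα1' : 1 + 1/(2+γ) < α := by rwa [gdiv2 hγ] at hα1
  have hα2' : α < 1 + 1/(2+γ) + 1/(3+3*γ+γ^2) := by rwa [gdiv2 hγ, gdiv3 hγ] at hα2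
  refine ⟨tHit_one hγ hα1' hα2', ?_, ?_, ?_⟩
  · rw [tHit_two hγ hα1' hα2', tHit_one hγ hα1' hα2', sA_zero', gdiv2 hγ]; ring
  · intro j hj
    obtain ⟨k, rfl⟩ : ∃ k, j = k+3 := ⟨j-3, by omega⟩
    rw [show k+3-1 = k+2 by omega, show k+3-3 = k by omega]
    rw [tHit_three_plus hγ hα1' hα2' k, tHit_ge2 hγ hα1' hα2' k, uu_iter hγ k]
    have hrec : sA γ α (k+1)
        = sA γ α k + uu γ α k + (1 - uu γ α k*(3+3*γ+γ^2))/(2+γ) := rfl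
    rw [hrec]; ring
  · have hRe : α - ((1 + γ / gam γ 2) + (1+γ)/(2+γ)*α)/(1+(1+γ)/(2+γ))
        = (α - (1 + 1/(2+γ)))/(1 + (1+γ)/(2+γ)) := by
      rw [gdiv2 hγ]
      have hden : (0:ℝ) < 1 + (1+γ)/(2+γ) := by positivity
      field_simp
      ring
    rw [hRe]
    have hU := uu_tendsto hγ hα1' hα2'
    set U := (α - (1 + 1/(2+γ)))/(1 + (1+γ)/(2+γ)) with hUdef
    have hw : Filter.Tendsto (fun i : ℕ => uu γ α i + (1 - (3+3*γ+γ^2) * uu γ α i)/(2+γ))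
        Filter.atTop (nhds (U + (1 - (3+3*γ+γ^2) * U)/(2+γ))) :=
      hU.add ((Filter.Tendsto.sub tendsto_const_nhds (hU.const_mul _)).div_const _)
    have hcomp := hw.comp (Filter.tendsto_sub_atTop_nat 2)
    apply Filter.Tendsto.congr' _ hcomp
    filter_upwards [Filter.eventually_ge_atTop 2] with j hj
    obtain ⟨i, rfl⟩ : ∃ i, j = i+2 := ⟨j-2, by omega⟩
    show uu γ α (i+2-2) + (1 - (3+3*γ+γ^2) * uu γ α (i+2-2))/(2+γ)
        = tHit γ 0 α (i+2+1) - tHit γ 0 α (i+2)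
    rw [show i+2-2 = i by omega, show i+2+1 = i+3 by omega,
      tHit_three_plus hγ hα1' hα2' i, tHit_ge2 hγ hα1' hα2' i]
    have hrec : sA γ α (i+1)
        = sA γ α i + uu γ α i + (1 - uu γ α i*(3+3*γ+γ^2))/(2+γ) := rfl
    rw [hrec]; ring

end

end SelectiveSweeps
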